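/- Let f : ℝⁿ → ℝ be a multivariate quartic polynomial. Then for every x ∈ ℝⁿ and t > 0, the Hessian of the Steklov function with respect to x satisfies ∇_{xx} μ_f(x,t) = ∇²f(x) + (t²/6)·Σ_{i=1}^n ∇²f_{ii}, where f_{ii} := ∂²f/∂x_i² and each ∇²f_{ii} is a constant n×n matrix. -/

import Mathlib

open MeasureTheory Matrix Filter

/-- Partial derivative of `f` in the `i`-th coordinate direction. -/
noncomputable def pd {n : ℕ} (i : Fin n) (f : (Fin n → ℝ) → ℝ) : (Fin n → ℝ) → ℝ :=
  fun x => fderiv ℝ f x (Pi.single i 1)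

/-- The gradient of `f` at `x`, as a vector of first partial derivatives. -/
noncomputable def grad {n : ℕ} (f : (Fin n → ℝ) → ℝ) (x : Fin n → ℝ) : Fin n → ℝ :=
  fun i => pd i f x

/-- The Hessian matrix of `f` at `x`, of second partial derivatives. -/
noncomputable def hess {n : ℕ} (f : (Fin n → ℝ) → ℝ) (x : Fin n → ℝ) :
    Matrix (Fin n) (Fin n) ℝ :=
  Matrix.of fun i j => pd i (pd j f) x

/-- The Steklov function `μ_f(x,t) = (1/(2t)^n) ∫_{x-t}^{x+t} ⋯ ∫ f`. -/
noncomputable def steklov {n : ℕ} (f : (Fin n → ℝ) → ℝ) (x : Fin n → ℝ) (t : ℝ) : ℝ :=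
  (1 / (2 * t) ^ n) * ∫ τ in Set.univ.pi (fun i => Set.Icc (x i - t) (x i + t)), f τ

/-- `f` is a multivariate quartic polynomial: a polynomial of total degree at most 4. -/
def IsMQP {n : ℕ} (f : (Fin n → ℝ) → ℝ) : Prop :=
  ∃ P : MvPolynomial (Fin n) ℝ, P.totalDegree ≤ 4 ∧ ∀ x, f x = MvPolynomial.eval x P

/-- The closed Euclidean (ℓ₂) ball of radius `L` centered at `0` in `ℝⁿ`. -/
def ball2 {n : ℕ} (L : ℝ) : Set (Fin n → ℝ) := {y | ∑ i, (y i) ^ 2 ≤ L ^ 2}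

/-- The Euclidean (ℓ₂) norm of a vector. -/
noncomputable def l2norm {m : ℕ} (v : Fin m → ℝ) : ℝ := Real.sqrt (∑ i, (v i) ^ 2)

noncomputable def stek1 (t : ℝ) (m : ℕ) (u : ℝ) : ℝ :=
  ((u + t) ^ (m + 1) - (u - t) ^ (m + 1)) / (2 * t * (m + 1))

lemma stek1_eq {t : ℝ} (ht : t ≠ 0) {m : ℕ} (hm : m ≤ 4) (u : ℝ) :
    stek1 t m u = u ^ m + t ^ 2 / 6 * ((m * (m - 1) : ℕ) : ℝ) * u ^ (m - 2)
      + (if m = 4 then t ^ 4 / 5 else 0) := by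
  interval_cases m <;> simp [stek1] <;> field_simp <;> ring

variable {n : ℕ}

noncomputable def Ssum (a : Fin n → ℕ) (s : Finset (Fin n)) (x : Fin n → ℝ) : ℝ :=
  ∑ i ∈ s, ((a i * (a i - 1) : ℕ) : ℝ) * (x i) ^ (a i - 2) * ∏ j ∈ s.erase i, (x j) ^ (a j)

lemma Ssum_const (a : Fin n → ℕ) (s : Finset (Fin n)) (h : ∑ i ∈ s, a i ≤ 2) (x : Fin n → ℝ) :
    Ssum a s x = ∑ i ∈ s, ((a i * (a i - 1) : ℕ) : ℝ) := by
  refine Finset.sum_congr rfl fun i hi => ?_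
  rcases Nat.lt_or_ge (a i) 2 with h2 | h2
  · interval_cases h0 : a i <;> simp
  · have hsum : a i + ∑ j ∈ s.erase i, a j = ∑ j ∈ s, a j := Finset.add_sum_erase s a hi
    have hai : a i = 2 := by omega
    have hj : ∀ j ∈ s.erase i, a j = 0 := by
      intro j hjmem
      have := Finset.single_le_sum (f := a) (fun k _ => Nat.zero_le _) hjmem
      omega
    have hprod : ∏ j ∈ s.erase i, (x j) ^ (a j) = 1 :=
      Finset.prod_eq_one fun j hjm => by rw [hj j hjm, pow_zero]
    rw [hprod, hai]
    norm_num

lemma Ssum_insert (a : Fin n → ℕ) {s : Finset (Fin n)} {k : Fin n} (hk : k ∉ s) (x : Fin n → ℝ) :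
    Ssum a (insert k s) x
      = ((a k * (a k - 1) : ℕ) : ℝ) * (x k) ^ (a k - 2) * ∏ j ∈ s, (x j) ^ (a j)
        + (x k) ^ (a k) * Ssum a s x := by
  rw [Ssum, Finset.sum_insert hk, Finset.erase_insert hk]
  congr 1
  rw [Ssum, Finset.mul_sum]
  refine Finset.sum_congr rfl fun i hi => ?_
  have hik : k ≠ i := fun h => hk (h ▸ hi)
  rw [Finset.erase_insert_of_ne hik, Finset.prod_insert (fun h => hk (Finset.mem_of_mem_erase h))]
  ring

lemma key_prod {t : ℝ} (ht : t ≠ 0) (a : Fin n → ℕ) (s : Finset (Fin n))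
    (h4 : ∑ i ∈ s, a i ≤ 4) :
    ∃ r : ℝ, (∀ x : Fin n → ℝ,
        ∏ i ∈ s, stek1 t (a i) (x i)
          = (∏ i ∈ s, (x i) ^ (a i)) + t ^ 2 / 6 * Ssum a s x + r)
      ∧ (r ≠ 0 → 4 ≤ ∑ i ∈ s, a i) := by
  classical
  induction s using Finset.induction_on with
  | empty => exact ⟨0, fun x => by simp [Ssum], by simp⟩
  | @insert k s hk IH =>
    rw [Finset.sum_insert hk] at h4 ⊢
    obtain ⟨r, Hr, hr4⟩ := IH (by omega)
    have hak4 : a k ≤ 4 := by omega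
    refine ⟨(if a k = 4 then t ^ 4 / 5 else 0) * (1 + r)
        + (if a k = 0 then r else 0)
        + (if a k = 2 then (t ^ 2 / 6) * 2 * (t ^ 2 / 6)
              * (∑ i ∈ s, ((a i * (a i - 1) : ℕ) : ℝ)) else 0), fun x => ?_, ?_⟩
    · rw [Finset.prod_insert hk, Finset.prod_insert hk, Ssum_insert a hk, Hr x,
        stek1_eq ht hak4 (x k)]
      have hr0 : 1 ≤ a k → r = 0 := fun h1 => by
        by_contra h; have := hr4 h; omega
      interval_cases hakv : a k
      · norm_num; try ring
      · rw [hr0 (by norm_num)]; norm_num; try ring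
      · rw [hr0 (by norm_num), Ssum_const a s (by omega) x]; norm_num; try ring
      · have hSs : Ssum a s x = 0 := by
          rw [Ssum_const a s (by omega) x]
          refine Finset.sum_eq_zero fun i hi => ?_
          have h1 := Finset.single_le_sum (f := a) (fun k _ => Nat.zero_le _) hi
          have h2 : a i ≤ 1 := by omega
          interval_cases hv : a i <;> simp
        rw [hr0 (by norm_num), hSs]; norm_num; try ring
      · have hzero : ∀ i ∈ s, a i = 0 := fun i hi => by
          have := Finset.single_le_sum (f := a) (fun k _ => Nat.zero_le _) hi
          omega
        have hSs : Ssum a s x = 0 := by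
          rw [Ssum_const a s (by omega) x]
          exact Finset.sum_eq_zero fun i hi => by rw [hzero i hi]; simp
        have hPs : ∏ i ∈ s, (x i) ^ (a i) = 1 :=
          Finset.prod_eq_one fun i hi => by rw [hzero i hi, pow_zero]
        rw [hr0 (by norm_num), hSs, hPs]; norm_num; try ring
    · intro h
      interval_cases hakv : a k
      · norm_num at h
        have := hr4 h
        omega
      · norm_num at h
      · norm_num at h
        have hC : ∑ i ∈ s, ((a i * (a i - 1) : ℕ) : ℝ) ≠ 0 := by
          intro hc
          push_cast at hc
          rw [hc] at h
          norm_num at h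
        have hex : ∃ i ∈ s, 2 ≤ a i := by
          by_contra hall
          push_neg at hall
          refine hC (Finset.sum_eq_zero fun i hi => ?_)
          have h1 : a i ≤ 1 := by have := hall i hi; omega
          interval_cases hv : a i <;> simp
        obtain ⟨i, hi, h2i⟩ := hex
        have := Finset.single_le_sum (f := a) (fun k _ => Nat.zero_le _) hi
        omega
      · norm_num at h
      · omega

open MvPolynomial

lemma hasFDerivAt_eval (P : MvPolynomial (Fin n) ℝ) (x : Fin n → ℝ) :
    HasFDerivAt (fun y : Fin n → ℝ => eval y P)
      (∑ j, eval x (pderiv j P) • (ContinuousLinearMap.proj j : (Fin n → ℝ) →L[ℝ] ℝ)) x := by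
  induction P using MvPolynomial.induction_on with
  | C a =>
    simp only [eval_C, pderiv_C, map_zero, zero_smul, Finset.sum_const_zero]
    exact hasFDerivAt_const a x
  | add p q hp hq =>
    simp only [eval_add, map_add, add_smul, Finset.sum_add_distrib]
    exact hp.add hq
  | mul_X p i hp =>
    have hXi : HasFDerivAt (fun y : Fin n → ℝ => y i)
        (ContinuousLinearMap.proj i : (Fin n → ℝ) →L[ℝ] ℝ) x :=
      hasFDerivAt_apply i x
    simp only [eval_mul, eval_X]
    refine (hp.mul hXi).congr_fderiv ?_
    symm
    rw [Finset.smul_sum]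
    have hterm : ∀ j : Fin n,
        eval x (pderiv j (p * X i)) • (ContinuousLinearMap.proj j : (Fin n → ℝ) →L[ℝ] ℝ)
        = (x i * eval x (pderiv j p)) • (ContinuousLinearMap.proj j : (Fin n → ℝ) →L[ℝ] ℝ)
          + (if j = i then eval x p • (ContinuousLinearMap.proj j : (Fin n → ℝ) →L[ℝ] ℝ) else 0) := by
      intro j
      rw [pderiv_mul, pderiv_X]
      by_cases hji : j = i
      · subst hji
        simp [Pi.single_eq_same, mul_comm, add_smul, mul_smul]
      · simp [Pi.single_eq_of_ne (Ne.symm hji), hji, mul_comm, mul_smul]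
    rw [Finset.sum_congr rfl fun j _ => hterm j, Finset.sum_add_distrib,
      Finset.sum_ite_eq' Finset.univ i
        (fun j => eval x p • (ContinuousLinearMap.proj j : (Fin n → ℝ) →L[ℝ] ℝ))]
    simp only [Finset.mem_univ, if_true]
    rw [add_comm]
    congr 1
    · ext v
      simp [mul_smul, mul_assoc]

lemma pd_eval (i : Fin n) (P : MvPolynomial (Fin n) ℝ) :
    pd i (fun y => eval y P) = fun x => eval x (pderiv i P) := by
  funext x
  rw [pd, (hasFDerivAt_eval P x).fderiv]
  simp only [ContinuousLinearMap.coe_sum', Finset.sum_apply, ContinuousLinearMap.smul_apply,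
    ContinuousLinearMap.proj_apply, Pi.single_apply, smul_eq_mul]
  simp [mul_ite, mul_one, mul_zero, Finset.sum_ite_eq']

lemma hess_eval (P : MvPolynomial (Fin n) ℝ) (x : Fin n → ℝ) :
    hess (fun y => eval y P) x
      = Matrix.of fun i j => eval x (pderiv i (pderiv j P)) := by
  ext i j
  rw [hess, Matrix.of_apply, Matrix.of_apply, pd_eval j P, pd_eval i (pderiv j P)]

lemma td_pderiv_le (j : Fin n) (P : MvPolynomial (Fin n) ℝ) (d : ℕ)
    (h : P.totalDegree ≤ d + 1) : (pderiv j P).totalDegree ≤ d := by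
  conv_lhs => rw [P.as_sum]
  rw [map_sum]
  refine le_trans (totalDegree_finset_sum _ _) (Finset.sup_le fun a ha => ?_)
  rw [pderiv_monomial]
  by_cases hz : coeff a P * (a j) = 0
  · rw [hz, monomial_zero, totalDegree_zero]; exact Nat.zero_le _
  · rw [totalDegree_monomial _ hz]
    have haj : 1 ≤ a j := by
      rcases Nat.eq_zero_or_pos (a j) with h0 | h0
      · exact absurd (by rw [h0]; simp) hz
      · exact h0
    have hsum : (a.sum fun _ e => e) ≤ d + 1 := le_trans (le_totalDegree ha) h
    have e1 : (a.sum fun _ e => e) = ∑ i, a i := Finsupp.sum_fintype _ _ fun _ => rfl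
    have e2 : ((a - Finsupp.single j 1).sum fun _ e => e)
        = ∑ i, ((a - Finsupp.single j 1 : Fin n →₀ ℕ) i) :=
      Finsupp.sum_fintype _ _ fun _ => rfl
    rw [e2]
    have hdecomp : ∀ i : Fin n, ((a - Finsupp.single j 1 : Fin n →₀ ℕ) i)
        = a i - (if j = i then 1 else 0) := by
      intro i
      rw [Finsupp.tsub_apply, Finsupp.single_apply]
    rw [Finset.sum_congr rfl fun i _ => hdecomp i]
    have d1 : ∑ i, a i = a j + ∑ i ∈ Finset.univ.erase j, a i :=
      (Finset.add_sum_erase _ a (Finset.mem_univ j)).symm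
    have d2 : ∑ i, (a i - if j = i then 1 else 0)
        = (a j - 1) + ∑ i ∈ Finset.univ.erase j, a i := by
      rw [← Finset.add_sum_erase _ (fun i => a i - if j = i then 1 else 0) (Finset.mem_univ j)]
      congr 1
      · rw [if_pos rfl]
      · exact Finset.sum_congr rfl fun i hi => by
          rw [if_neg (Ne.symm (Finset.mem_erase.mp hi).1), Nat.sub_zero]
    rw [d2]
    rw [e1] at hsum
    omega

lemma eval_const_of_td_zero {P : MvPolynomial (Fin n) ℝ} (h : P.totalDegree = 0)
    (y z : Fin n → ℝ) : eval y P = eval z P := by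
  rw [eval_eq', eval_eq']
  refine Finset.sum_congr rfl fun d hd => ?_
  have := (totalDegree_eq_zero_iff (Fin n) P).mp h d hd
  have h1 : ∀ w : Fin n → ℝ, ∏ i, w i ^ d i = 1 := fun w =>
    Finset.prod_eq_one fun i _ => by rw [this i, pow_zero]
  rw [h1, h1]

lemma integral_box_prod (s' : Fin n → Set ℝ) (hms : ∀ i, MeasurableSet (s' i))
    (d : Fin n → ℕ) :
    ∫ τ in Set.univ.pi s', (∏ i, τ i ^ d i) = ∏ i, ∫ u in s' i, u ^ d i := by
  rw [← integral_indicator (MeasurableSet.univ_pi hms)]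
  have hind : (Set.univ.pi s').indicator (fun τ : Fin n → ℝ => ∏ i, τ i ^ d i)
      = fun τ => ∏ i, (s' i).indicator (fun u => u ^ d i) (τ i) := by
    funext τ
    by_cases h : τ ∈ Set.univ.pi s'
    · rw [Set.indicator_of_mem h]
      exact Finset.prod_congr rfl fun i _ =>
        (Set.indicator_of_mem (h i (Set.mem_univ i)) _).symm
    · rw [Set.indicator_of_notMem h]
      rw [Set.mem_univ_pi] at h
      push_neg at h
      obtain ⟨i, hi⟩ := h
      exact (Finset.prod_eq_zero (Finset.mem_univ i) (Set.indicator_of_notMem hi _)).symm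
  rw [hind]
  exact (MeasureTheory.integral_fintype_prod_volume_eq_prod
      (fun i u => (s' i).indicator (fun v => v ^ d i) u)).trans <| Finset.prod_congr rfl fun i _ => integral_indicator (hms i)

lemma steklov_eval (P : MvPolynomial (Fin n) ℝ) (x : Fin n → ℝ) {t : ℝ} (ht : 0 < t) :
    steklov (fun y => eval y P) x t
      = ∑ a ∈ P.support, coeff a P * ∏ i, stek1 t (a i) (x i) := by
  rw [steklov]
  have hset : Set.univ.pi (fun i => Set.Icc (x i - t) (x i + t))
      = Set.Icc (fun i => x i - t) (fun i => x i + t) := Set.pi_univ_Icc _ _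
  have hcompact : IsCompact (Set.Icc (fun i => x i - t) (fun i => x i + t)) := isCompact_Icc
  simp_rw [eval_eq']
  rw [integral_finset_sum]
  · have hterm : ∀ a ∈ P.support,
        ∫ τ in Set.univ.pi (fun i => Set.Icc (x i - t) (x i + t)),
            (coeff a P * ∏ i, τ i ^ a i)
          = coeff a P * ∏ i, (((x i + t) ^ (a i + 1) - (x i - t) ^ (a i + 1)) / (a i + 1)) := by
      intro a _
      rw [integral_const_mul, integral_box_prod _ (fun i => measurableSet_Icc)]
      congr 1
      refine Finset.prod_congr rfl fun i _ => ?_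
      rw [MeasureTheory.integral_Icc_eq_integral_Ioc,
        ← intervalIntegral.integral_of_le (by linarith), integral_pow]
    rw [Finset.sum_congr rfl hterm, Finset.mul_sum]
    refine Finset.sum_congr rfl fun a _ => ?_
    have hprod : ∏ i, stek1 t (a i) (x i)
        = (∏ i, (((x i + t) ^ (a i + 1) - (x i - t) ^ (a i + 1)) / (a i + 1))) * (1 / (2 * t)) ^ n := by
      have hc : (1 / (2 * t)) ^ n = ∏ _i : Fin n, (1 / (2 * t)) := by
        rw [Finset.prod_const, Finset.card_univ, Fintype.card_fin]
      rw [hc, ← Finset.prod_mul_distrib]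
      refine Finset.prod_congr rfl fun i _ => ?_
      rw [stek1]
      have h1 : (t : ℝ) ≠ 0 := ne_of_gt ht
      have h2 : ((a i : ℝ) + 1) ≠ 0 := by positivity
      field_simp
    rw [hprod]
    simp only [one_div, inv_pow]
    ring
  · intro a _
    refine ContinuousOn.integrableOn_compact (hset ▸ hcompact) ?_
    exact (continuous_const.mul
      (continuous_finset_prod _ fun i _ => (continuous_apply i).pow _)).continuousOn


lemma eval_pderiv2_monomial (k : Fin n) (a : Fin n →₀ ℕ) (c : ℝ) (x : Fin n → ℝ) :
    eval x (pderiv k (pderiv k (monomial a c)))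
      = c * (((a k * (a k - 1) : ℕ) : ℝ) * x k ^ (a k - 2)
          * ∏ j ∈ Finset.univ.erase k, x j ^ a j) := by
  rw [pderiv_monomial, pderiv_monomial, eval_monomial]
  have hk1 : ((a - Finsupp.single k 1 : Fin n →₀ ℕ) k) = a k - 1 := by
    rw [Finsupp.tsub_apply, Finsupp.single_apply, if_pos rfl]
  have hexp : ∀ i : Fin n, ((a - Finsupp.single k 1 - Finsupp.single k 1 : Fin n →₀ ℕ) i)
      = if k = i then a k - 2 else a i := by
    intro i
    rw [Finsupp.tsub_apply, Finsupp.tsub_apply, Finsupp.single_apply]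
    by_cases h : k = i
    · subst h; rw [if_pos rfl, if_pos rfl]; omega
    · rw [if_neg h, if_neg h, Nat.sub_zero, Nat.sub_zero]
  rw [Finsupp.prod_fintype _ _ (fun i => pow_zero _)]
  have hprod : (∏ i, x i ^ ((a - Finsupp.single k 1 - Finsupp.single k 1 : Fin n →₀ ℕ) i))
      = x k ^ (a k - 2) * ∏ j ∈ Finset.univ.erase k, x j ^ a j := by
    rw [← Finset.mul_prod_erase Finset.univ
      (fun i => x i ^ ((a - Finsupp.single k 1 - Finsupp.single k 1 : Fin n →₀ ℕ) i))
      (Finset.mem_univ k)]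
    congr 1
    · rw [hexp k, if_pos rfl]
    · exact Finset.prod_congr rfl fun j hj => by
        rw [hexp j, if_neg (Ne.symm (Finset.mem_erase.mp hj).1)]
  rw [hprod, hk1, Nat.cast_mul]
  ring

lemma eval_pderiv2 (k : Fin n) (P : MvPolynomial (Fin n) ℝ) (x : Fin n → ℝ) :
    eval x (pderiv k (pderiv k P))
      = ∑ a ∈ P.support, coeff a P * (((a k * (a k - 1) : ℕ) : ℝ) * x k ^ (a k - 2)
          * ∏ j ∈ Finset.univ.erase k, x j ^ a j) := by
  conv_lhs => rw [P.as_sum]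
  rw [map_sum, map_sum, map_sum]
  exact Finset.sum_congr rfl fun a _ => eval_pderiv2_monomial k a _ x

lemma support_sum_le {P : MvPolynomial (Fin n) ℝ} (hdeg : P.totalDegree ≤ 4)
    {a : Fin n →₀ ℕ} (ha : a ∈ P.support) : ∑ i, a i ≤ 4 := by
  have h1 : (a.sum fun _ e => e) ≤ 4 := le_trans (le_totalDegree ha) hdeg
  rwa [Finsupp.sum_fintype _ _ fun _ => rfl] at h1

lemma steklov_poly {t : ℝ} (ht : 0 < t) (P : MvPolynomial (Fin n) ℝ)
    (hdeg : P.totalDegree ≤ 4) :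
    ∃ r : ℝ, ∀ x, steklov (fun y => eval y P) x t
      = eval x (P + C (t ^ 2 / 6) * ∑ k, pderiv k (pderiv k P) + C r) := by
  have ht' : t ≠ 0 := ne_of_gt ht
  have hex : ∀ a : Fin n →₀ ℕ, ∃ r : ℝ, (∑ i, a i ≤ 4) →
      ∀ x : Fin n → ℝ, ∏ i, stek1 t (a i) (x i)
        = (∏ i, (x i) ^ (a i)) + t ^ 2 / 6 * Ssum (fun i => a i) Finset.univ x + r := by
    intro a
    by_cases h : ∑ i, a i ≤ 4
    · obtain ⟨r, hr, _⟩ := key_prod ht' (fun i => a i) Finset.univ h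
      exact ⟨r, fun _ => hr⟩
    · exact ⟨0, fun hc => absurd hc h⟩
  choose rfun hrfun using hex
  refine ⟨∑ a ∈ P.support, coeff a P * rfun a, fun x => ?_⟩
  rw [steklov_eval P x ht]
  have hterm : ∀ a ∈ P.support, coeff a P * ∏ i, stek1 t (a i) (x i)
      = coeff a P * (∏ i, (x i) ^ (a i))
        + t ^ 2 / 6 * (coeff a P * Ssum (fun i => a i) Finset.univ x)
        + coeff a P * rfun a := by
    intro a ha
    rw [hrfun a (support_sum_le hdeg ha) x]
    ring
  rw [Finset.sum_congr rfl hterm, Finset.sum_add_distrib, Finset.sum_add_distrib,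
    ← Finset.mul_sum]
  have h1 : ∑ a ∈ P.support, coeff a P * ∏ i, (x i) ^ (a i) = eval x P := (eval_eq' x P).symm
  have h2 : ∑ a ∈ P.support, coeff a P * Ssum (fun i => a i) Finset.univ x
      = ∑ k, eval x (pderiv k (pderiv k P)) := by
    simp only [Ssum, Finset.mul_sum]
    rw [Finset.sum_comm]
    exact Finset.sum_congr rfl fun k _ => (eval_pderiv2 k P x).symm
  rw [h1, h2]
  simp only [map_add, _root_.map_mul, eval_C, map_sum]

/-- For a multivariate quartic polynomial `f`, the Hessian of the Steklov function satisfies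
`∇ₓₓ μ_f(x,t) = ∇²f(x) + (t²/6) Σᵢ ∇²f_{ii}`, where each `∇²f_{ii}` is a constant matrix. -/
theorem steklov_hessian {n : ℕ} (f : (Fin n → ℝ) → ℝ) (hf : IsMQP f)
    (x : Fin n → ℝ) (t : ℝ) (ht : 0 < t) :
    hess (fun y => steklov f y t) x
      = hess f x + (t ^ 2 / 6) • ∑ i, hess (pd i (pd i f)) x
    ∧ ∀ i : Fin n, ∀ y z : Fin n → ℝ, hess (pd i (pd i f)) y = hess (pd i (pd i f)) z := by
  obtain ⟨P, hdeg, hfP⟩ := hf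
  have hfun : f = fun y => MvPolynomial.eval y P := funext hfP
  subst hfun
  have hp2 : ∀ k : Fin n, pd k (pd k (fun y => eval y P))
      = fun w => eval w (pderiv k (pderiv k P)) := fun k => by
    rw [pd_eval, pd_eval]
  constructor
  · obtain ⟨r, hr⟩ := steklov_poly ht P hdeg
    have hQ : (fun y => steklov (fun z => eval z P) y t)
        = fun y => eval y (P + C (t ^ 2 / 6) * ∑ k, pderiv k (pderiv k P) + C r) :=
      funext hr
    rw [hQ, hess_eval, hess_eval P x]
    have hsum : ∀ k : Fin n, hess (pd k (pd k (fun y => eval y P))) x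
        = Matrix.of fun i j => eval x (pderiv i (pderiv j (pderiv k (pderiv k P)))) :=
      fun k => by rw [hp2 k, hess_eval]
    rw [Finset.sum_congr rfl fun k _ => hsum k]
    ext i j
    simp only [Matrix.of_apply, Matrix.add_apply, Matrix.smul_apply, Matrix.sum_apply,
      smul_eq_mul]
    simp only [map_add, map_sum, pderiv_C_mul, pderiv_C, map_zero, add_zero, _root_.map_mul,
      eval_C, Finset.mul_sum]
  · intro i y z
    rw [hp2 i, hess_eval, hess_eval]
    ext j k
    rw [Matrix.of_apply, Matrix.of_apply]
    refine eval_const_of_td_zero ?_ y z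
    have h3 : (pderiv i P).totalDegree ≤ 3 := td_pderiv_le i P 3 (by omega)
    have h2 : (pderiv i (pderiv i P)).totalDegree ≤ 2 :=
      td_pderiv_le i _ 2 (by omega)
    have h1 : (pderiv k (pderiv i (pderiv i P))).totalDegree ≤ 1 :=
      td_pderiv_le k _ 1 (by omega)
    have h0 : (pderiv j (pderiv k (pderiv i (pderiv i P)))).totalDegree ≤ 0 :=
      td_pderiv_le j _ 0 (by omega)
    omega
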